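/- Let x₀ ∈ S be such that r(x₀) > 0, and let ν = δ_{x₀}. Then ν is invariant for the kernel q̃(x,·) = δ_x(·), and the rate function satisfies I(ν) ≤ R(δ_{x₀}(·) ‖ K(x₀,·)) ≤ log(1/r(x₀)) < ∞. In particular, finiteness of I(ν) does not imply that ν is absolutely continuous with respect to π. -/

import Mathlib

open MeasureTheory ProbabilityTheory Filter Set Metric
open scoped ENNReal NNReal Topology

noncomputable section

namespace MHLDP

variable {α : Type*}

open Classical in
/-- Relative entropy `R(μ‖ν) = ∫ log (dμ/dν) dμ` if `μ ≪ ν` (and the integral exists),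
`+∞` otherwise. -/
def relEnt [MeasurableSpace α] (μ ν : Measure α) : ℝ≥0∞ :=
  if μ ≪ ν ∧ Integrable (fun x => Real.log ((μ.rnDeriv ν x).toReal)) μ
  then ENNReal.ofReal (∫ x, Real.log ((μ.rnDeriv ν x).toReal) ∂μ)
  else ⊤

variable {d : ℕ} {S : Set (EuclideanSpace ℝ (Fin d))}

/-- Lebesgue measure on (the subtype) `S ⊆ ℝ^d`. -/
def leb (S : Set (EuclideanSpace ℝ (Fin d))) : Measure S :=
  Measure.comap Subtype.val volume

/-- The Hastings ratio `min{1, π(y)J(x|y)/(π(x)J(y|x))}`, set to `1` when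
`π(x)J(y|x) = 0`.  Here `Jd x y` denotes the density `J(y|x)`. -/
def hastingsRatio (πd : S → ℝ) (Jd : S → S → ℝ) (x y : S) : ℝ :=
  if πd x * Jd x y = 0 then 1 else min 1 ((πd y * Jd y x) / (πd x * Jd x y))

/-- The Lebesgue density `a(x,y)` of the acceptance part of the MH kernel. -/
def accDens (πd : S → ℝ) (Jd : S → S → ℝ) (x y : S) : ℝ :=
  hastingsRatio πd Jd x y * Jd x y

/-- The acceptance sub-probability kernel `a(x,dy)`. -/
def acc (πd : S → ℝ) (Jd : S → S → ℝ) (x : S) : Measure S :=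
  (leb S).withDensity (fun y => ENNReal.ofReal (accDens πd Jd x y))

/-- The rejection probability `r(x) = 1 - a(x,S)`. -/
def rej (πd : S → ℝ) (Jd : S → S → ℝ) (x : S) : ℝ :=
  1 - (acc πd Jd x Set.univ).toReal

/-- The Metropolis–Hastings transition kernel `K(x,dy) = a(x,dy) + r(x) δ_x(dy)`. -/
def mhK (πd : S → ℝ) (Jd : S → S → ℝ) (x : S) : Measure S :=
  acc πd Jd x + ENNReal.ofReal (rej πd Jd x) • Measure.dirac x

/-- `μ` is an invariant measure for the transition kernel `q`. -/
def Invariant [MeasurableSpace α] (μ : Measure α) (q : α → Measure α) : Prop :=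
  ∀ A : Set α, MeasurableSet A → μ A = ∫⁻ x, q x A ∂μ

/-- The rate function `I(ν) = inf_q ∫ R(q(x,·) ‖ K(x,·)) ν(dx)`, infimum over Markov
transition kernels `q` with invariant measure `ν`. -/
def rateI [MeasurableSpace α] (K : α → Measure α) (ν : Measure α) : ℝ≥0∞ :=
  ⨅ (q : Kernel α α) (_ : IsMarkovKernel q) (_ : Invariant ν (fun x => q x)),
    ∫⁻ x, relEnt (q x) (K x) ∂ν

/-- The joint measure `(μ ⊗ K)(dx dy) = μ(dx) K(x,dy)` on `S × S`. -/
def prodK [MeasurableSpace α] (μ : Measure α) (K : α → Measure α) : Measure (α × α) :=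
  μ.bind fun x => (K x).map fun y => (x, y)

/-- The rate function `I(μ) = inf_{γ ∈ A(μ)} R(γ ‖ μ ⊗ K)`, infimum over probability
measures on `S × S` with both marginals equal to `μ`. -/
def rateEmp [MeasurableSpace α] (K : α → Measure α) (μ : Measure α) : ℝ≥0∞ :=
  ⨅ (γ : Measure (α × α)) (_ : IsProbabilityMeasure γ)
    (_ : γ.map Prod.fst = μ) (_ : γ.map Prod.snd = μ), relEnt γ (prodK μ K)

/-- Assumptions (A.1) and (A.2): `π` is a probability measure on `S` with continuous
density `πd` w.r.t. Lebesgue measure, equivalent to Lebesgue measure; the proposal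
distributions `J(·|x)` are probability measures with jointly continuous, bounded,
strictly positive density `Jd x · = J(·|x)`, absolutely continuous w.r.t. `π`. -/
structure Assumptions (πd : S → ℝ) (Jd : S → S → ℝ) (π : Measure S) : Prop where
  measS : MeasurableSet S
  prob_pi : IsProbabilityMeasure π
  pi_nonneg : ∀ x, 0 ≤ πd x
  pi_dens : π = (leb S).withDensity (fun x => ENNReal.ofReal (πd x))
  pi_cont : Continuous πd
  pi_ac : π ≪ leb S
  leb_ac : leb S ≪ π
  J_nonneg : ∀ x y, 0 ≤ Jd x y
  J_dens_prob : ∀ x, IsProbabilityMeasure ((leb S).withDensity (fun y => ENNReal.ofReal (Jd x y)))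
  J_ac_pi : ∀ x, (leb S).withDensity (fun y => ENNReal.ofReal (Jd x y)) ≪ π
  J_cont : Continuous (fun p : S × S => Jd p.1 p.2)
  J_bdd : ∃ C : ℝ, ∀ x y, Jd x y ≤ C
  J_pos : ∀ x y, 0 < Jd x y

/-- Assumption (A.3): existence of a Lyapunov function `U` for the kernel `K`. -/
structure Lyapunov (K : S → Measure S) (U : S → ℝ) : Prop where
  nonneg : ∀ x, 0 ≤ U x
  lb : ∃ M : ℝ, ∀ x, (M : EReal) ≤ (U x : EReal)
        - ENNReal.log (∫⁻ y, ENNReal.ofReal (Real.exp (U y)) ∂(K x))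
  cpt : ∀ M : ℝ, IsCompact (closure {x : S | (U x : EReal)
        - ENNReal.log (∫⁻ y, ENNReal.ofReal (Real.exp (U y)) ∂(K x)) ≤ (M : EReal)})
  bdd_on_cpt : ∀ C : Set S, IsCompact C → ∃ B : ℝ, ∀ x ∈ C, U x ≤ B

/-- The law of `(X_0, …, X_n)` for the Markov chain with transition kernel `K`
started at `x`. -/
def chainLaw [MeasurableSpace α] (K : α → Measure α) (x : α) : (n : ℕ) → Measure (Fin (n + 1) → α)
  | 0 => Measure.dirac (fun _ => x)
  | (n + 1) => (chainLaw K x n).bind (fun p => (K (p (Fin.last n))).map (fun y => Fin.snoc p y))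

/-- The empirical measure of a finite path. -/
def empMeas [MeasurableSpace α] {n : ℕ} (p : Fin (n + 1) → α) : Measure α :=
  ((n : ℝ≥0∞) + 1)⁻¹ • ∑ i : Fin (n + 1), Measure.dirac (p i)

lemma empMeas_isProbabilityMeasure [MeasurableSpace α] {n : ℕ} (p : Fin (n + 1) → α) :
    IsProbabilityMeasure (empMeas p) := by
  constructor
  simp only [empMeas, Measure.smul_apply, Measure.finset_sum_apply, measure_univ, smul_eq_mul]
  rw [Finset.sum_const, Finset.card_univ, Fintype.card_fin, nsmul_eq_mul, mul_one]
  rw [show ((n + 1 : ℕ) : ℝ≥0∞) = (n : ℝ≥0∞) + 1 by push_cast; ring]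
  exact ENNReal.inv_mul_cancel (by simp) (by finiteness)

/-- The empirical measure of a finite path, as a probability measure. -/
def empProb [MeasurableSpace α] {n : ℕ} (p : Fin (n + 1) → α) : ProbabilityMeasure α :=
  ⟨empMeas p, empMeas_isProbabilityMeasure p⟩

end MHLDP

namespace MHLDP

variable {α : Type*} {d : ℕ} {S : Set (EuclideanSpace ℝ (Fin d))}

/-- The `k`-step transition probabilities of the kernel `K`. -/
def kIter [MeasurableSpace α] (K : α → Measure α) : ℕ → α → Measure α
  | 0, x => Measure.dirac x
  | (n + 1), x => (kIter K n x).bind K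

/-- Ergodicity of the stationary Markov chain with initial (invariant) distribution `μ` and
transition kernel `q`: every a.s. invariant set is trivial. -/
def KernelErgodic [MeasurableSpace α] (μ : Measure α) (q : α → Measure α) : Prop :=
  Invariant μ q ∧ ∀ A : Set α, MeasurableSet A →
    (∀ᵐ x ∂μ, x ∈ A → q x A = 1) → μ A = 0 ∨ μ A = 1

/-- The set `S₊ = {x ∈ S : π(x) > 0}`. -/
def Splus (πd : S → ℝ) : Set S := {x | 0 < πd x}

/-- The modulus `Δ_ε(x)` of the ball-smoothing construction. -/
def Delta (πd : S → ℝ) (Jd : S → S → ℝ) (ε : ℝ) (x : S) : ℝ :=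
  sSup {t : ℝ | ∀ y z : S, dist y x < t → dist z x < t →
    |Real.log (accDens πd Jd x x) - Real.log (accDens πd Jd y z)| < ε ∧
    |Real.log (rej πd Jd x) - Real.log (rej πd Jd y)| < ε}

/-- The random radius `ϱ^n` of the ball-smoothing construction, given the sample points `Y`. -/
def rad (πd : S → ℝ) (Jd : S → S → ℝ) (n : ℕ) (Y : ℕ → S) : ℝ :=
  sInf ({1 / (n : ℝ)}
    ∪ (Set.range fun i : Fin n => Delta πd Jd (1 / (n : ℝ)) (Y (i : ℕ)))
    ∪ {t : ℝ | ∃ i j : Fin n, Y (i : ℕ) ≠ Y (j : ℕ) ∧ t = dist (Y (i : ℕ)) (Y (j : ℕ)) / 2}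
    ∪ (Set.range fun i : Fin n =>
        Metric.infDist ((Y (i : ℕ) : EuclideanSpace ℝ (Fin d))) (frontier S) / 2)
    ∪ (Set.range fun i : Fin n => accDens πd Jd (Y (i : ℕ)) (Y (i : ℕ))))

/-- The volume `V_n = λ(B_{ϱ^n}(0))`. -/
def Vn (πd : S → ℝ) (Jd : S → S → ℝ) (n : ℕ) (Y : ℕ → S) : ℝ≥0∞ :=
  volume (Metric.ball (0 : EuclideanSpace ℝ (Fin d)) (rad πd Jd n Y))

/-- The smoothed random measure `ν_s^n(dx) = (1/(n V_n)) Σ_{i<n} 1{x ∈ B_{ϱ^n}(Y_i)} λ(dx)`. -/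
def smooth (πd : S → ℝ) (Jd : S → S → ℝ) (n : ℕ) (Y : ℕ → S) : Measure S :=
  ((n : ℝ≥0∞) * Vn πd Jd n Y)⁻¹ •
    (leb S).withDensity (fun x =>
      ∑ i : Fin n, if dist x (Y (i : ℕ)) < rad πd Jd n Y then (1 : ℝ≥0∞) else 0)

end MHLDP

namespace MHLDP

section Aux

variable {d : ℕ} {S : Set (EuclideanSpace ℝ (Fin d))}

lemma hastingsRatio_self (πd : S → ℝ) (Jd : S → S → ℝ) (x : S) :
    hastingsRatio πd Jd x x = 1 := by
  unfold hastingsRatio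
  split_ifs with h
  · rfl
  · rw [div_self h, min_self]

lemma hastingsRatio_le_one (πd : S → ℝ) (Jd : S → S → ℝ) (x y : S) :
    hastingsRatio πd Jd x y ≤ 1 := by
  unfold hastingsRatio
  split_ifs with h
  · exact le_rfl
  · exact min_le_left _ _

lemma accDens_le_J (πd : S → ℝ) (Jd : S → S → ℝ) (hJ : ∀ x y, 0 ≤ Jd x y) (x y : S) :
    accDens πd Jd x y ≤ Jd x y := by
  unfold accDens
  calc hastingsRatio πd Jd x y * Jd x y ≤ 1 * Jd x y :=
        mul_le_mul_of_nonneg_right (hastingsRatio_le_one πd Jd x y) (hJ x y)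
    _ = Jd x y := one_mul _

lemma acc_univ_le_one {πd : S → ℝ} {Jd : S → S → ℝ} {π : Measure S}
    (hA : Assumptions πd Jd π) (x : S) : acc πd Jd x Set.univ ≤ 1 := by
  rw [acc, withDensity_apply _ MeasurableSet.univ, Measure.restrict_univ]
  calc ∫⁻ y, ENNReal.ofReal (accDens πd Jd x y) ∂(leb S)
      ≤ ∫⁻ y, ENNReal.ofReal (Jd x y) ∂(leb S) :=
        lintegral_mono fun y =>
          ENNReal.ofReal_le_ofReal (accDens_le_J πd Jd hA.J_nonneg x y)
    _ = ((leb S).withDensity (fun y => ENNReal.ofReal (Jd x y))) Set.univ := by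
        rw [withDensity_apply _ MeasurableSet.univ, Measure.restrict_univ]
    _ = 1 := by
        haveI := hA.J_dens_prob x
        exact measure_univ

lemma rej_le_one (πd : S → ℝ) (Jd : S → S → ℝ) (x : S) : rej πd Jd x ≤ 1 := by
  unfold rej
  have := ENNReal.toReal_nonneg (a := acc πd Jd x Set.univ)
  linarith

lemma mhK_finite {πd : S → ℝ} {Jd : S → S → ℝ} {π : Measure S}
    (hA : Assumptions πd Jd π) (x : S) : IsFiniteMeasure (mhK πd Jd x) := by
  constructor
  rw [mhK]
  simp only [Measure.add_apply, Measure.smul_apply, smul_eq_mul]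
  have h1 : acc πd Jd x Set.univ ≤ 1 := acc_univ_le_one hA x
  have h2 : ENNReal.ofReal (rej πd Jd x) * Measure.dirac x Set.univ ≤ ENNReal.ofReal 1 := by
    rw [measure_univ, mul_one]
    exact ENNReal.ofReal_le_ofReal (rej_le_one πd Jd x)
  calc acc πd Jd x Set.univ + ENNReal.ofReal (rej πd Jd x) * Measure.dirac x Set.univ
      ≤ 1 + ENNReal.ofReal 1 := add_le_add h1 h2
    _ < ⊤ := by simp

lemma dirac_invariant_dirac (x₀ : S) :
    Invariant (Measure.dirac x₀) (fun x : S => Measure.dirac x) := by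
  intro A _
  rw [lintegral_dirac]

end Aux

/-- **Finiteness of the rate function at a Dirac mass.** If `r(x₀) > 0` and `ν = δ_{x₀}`,
then `ν` is invariant for `q̃(x,·) = δ_x(·)`, and
`I(ν) ≤ R(δ_{x₀} ‖ K(x₀,·)) ≤ log(1/r(x₀)) < ∞`; in particular finiteness of `I(ν)`
does not imply `ν ≪ π`. -/
theorem mh_dirac_finite_rate
    {d : ℕ} {S : Set (EuclideanSpace ℝ (Fin d))}
    (πd : S → ℝ) (Jd : S → S → ℝ) (π : Measure S) (hA : Assumptions πd Jd π)
    (x₀ : S) (hr : 0 < rej πd Jd x₀) :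
    Invariant (Measure.dirac x₀) (fun x : S => Measure.dirac x) ∧
    rateI (mhK πd Jd) (Measure.dirac x₀) ≤ relEnt (Measure.dirac x₀) (mhK πd Jd x₀) ∧
    relEnt (Measure.dirac x₀) (mhK πd Jd x₀) ≤
      ENNReal.ofReal (Real.log (1 / rej πd Jd x₀)) ∧
    rateI (mhK πd Jd) (Measure.dirac x₀) < ⊤ ∧
    ¬ (Measure.dirac x₀ ≪ π) := by
  set r : ℝ := rej πd Jd x₀ with hrdef
  set ν : Measure S := mhK πd Jd x₀ with hν
  haveI hfin : IsFiniteMeasure ν := mhK_finite hA x₀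
  -- ν {x₀} ≥ ofReal r
  have hν0 : ENNReal.ofReal r ≤ ν {x₀} := by
    rw [hν, mhK]
    simp only [Measure.add_apply, Measure.smul_apply, smul_eq_mul]
    rw [Measure.dirac_apply_of_mem (Set.mem_singleton x₀), mul_one]
    exact le_add_self
  have hrpos : (0 : ℝ≥0∞) < ENNReal.ofReal r := ENNReal.ofReal_pos.2 hr
  -- absolute continuity
  have hac : Measure.dirac x₀ ≪ ν := by
    intro s hs
    by_cases h : x₀ ∈ s
    · exfalso
      have h1 : ν {x₀} ≤ ν s := measure_mono (Set.singleton_subset_iff.2 h)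
      rw [hs] at h1
      exact absurd (le_antisymm (le_trans hν0 h1) (zero_le)) hrpos.ne'
    · rw [Measure.dirac_apply]
      exact Set.indicator_of_notMem h _
  -- Radon–Nikodym derivative bound
  set D : ℝ≥0∞ := (Measure.dirac x₀).rnDeriv ν x₀ with hD
  have hkey : (1 : ℝ≥0∞) = D * ν {x₀} := by
    conv_lhs => rw [← Measure.dirac_apply_of_mem (Set.mem_singleton x₀)]
    rw [← Measure.withDensity_rnDeriv_eq (Measure.dirac x₀) ν hac,
      withDensity_apply _ (measurableSet_singleton x₀),
      lintegral_singleton' (Measure.measurable_rnDeriv _ _) x₀]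
  have hDle : D ≤ (ENNReal.ofReal r)⁻¹ := by
    rw [ENNReal.le_inv_iff_mul_le]
    calc D * ENNReal.ofReal r ≤ D * ν {x₀} := mul_le_mul_right hν0 D
      _ = 1 := hkey.symm
  have hDtoReal : D.toReal ≤ 1 / r := by
    have hne : (ENNReal.ofReal r)⁻¹ ≠ ⊤ := ENNReal.inv_ne_top.2 hrpos.ne'
    have := ENNReal.toReal_mono hne hDle
    rwa [ENNReal.toReal_inv, ENNReal.toReal_ofReal hr.le, ← one_div] at this
  -- log bound
  have hr1 : r ≤ 1 := rej_le_one πd Jd x₀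
  have h1r : (1 : ℝ) ≤ 1 / r := one_le_one_div hr hr1
  have hlog : Real.log D.toReal ≤ Real.log (1 / r) := by
    rcases le_or_gt D.toReal 1 with h | h
    · exact le_trans (Real.log_nonpos ENNReal.toReal_nonneg h) (Real.log_nonneg h1r)
    · exact Real.log_le_log (lt_trans one_pos h) hDtoReal
  -- integrability
  set f : S → ℝ := fun x => Real.log (((Measure.dirac x₀).rnDeriv ν x).toReal) with hf
  have hfe : (fun _ : S => f x₀) =ᵐ[Measure.dirac x₀] f := by
    rw [Filter.EventuallyEq, ae_dirac_eq]
    exact Filter.eventually_pure.2 rfl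
  have hInt : Integrable f (Measure.dirac x₀) := (integrable_const (f x₀)).congr hfe
  -- the relative entropy bound
  have hRE : relEnt (Measure.dirac x₀) ν ≤ ENNReal.ofReal (Real.log (1 / r)) := by
    rw [relEnt, if_pos ⟨hac, hInt⟩, integral_dirac]
    exact ENNReal.ofReal_le_ofReal hlog
  -- invariance of dirac under the deterministic kernel
  have hinv : Invariant (Measure.dirac x₀) (fun x : S => Measure.dirac x) :=
    dirac_invariant_dirac x₀
  -- rate function bound
  have hrate : rateI (mhK πd Jd) (Measure.dirac x₀) ≤ relEnt (Measure.dirac x₀) ν := by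
    have hinv' : Invariant (Measure.dirac x₀)
        (fun x : S => (Kernel.deterministic id measurable_id : Kernel S S) x) := by
      intro A hAm
      simp only [Kernel.deterministic_apply, id]
      rw [lintegral_dirac]
    calc rateI (mhK πd Jd) (Measure.dirac x₀)
        ≤ ∫⁻ x, relEnt ((Kernel.deterministic id measurable_id : Kernel S S) x)
            (mhK πd Jd x) ∂(Measure.dirac x₀) := by
          exact iInf_le_of_le (Kernel.deterministic id measurable_id)
            (iInf_le_of_le inferInstance (iInf_le_of_le hinv' le_rfl))
      _ = relEnt (Measure.dirac x₀) ν := by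
          rw [lintegral_dirac]
          simp [Kernel.deterministic_apply, hν]
  refine ⟨hinv, hrate, hRE, lt_of_le_of_lt (le_trans hrate hRE) ENNReal.ofReal_lt_top, ?_⟩
  -- failure of absolute continuity w.r.t. π
  intro hdac
  rcases Nat.eq_zero_or_pos d with hd | hd
  · -- d = 0 : the space is a subsingleton and rej x₀ = 0, contradiction
    subst hd
    haveI : Subsingleton (EuclideanSpace ℝ (Fin 0)) := inferInstance
    haveI : Subsingleton S := inferInstance
    have hJeq : (fun y : S => ENNReal.ofReal (accDens πd Jd x₀ y)) =
        fun y : S => ENNReal.ofReal (Jd x₀ y) := by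
      funext y
      have hy : y = x₀ := Subsingleton.elim y x₀
      rw [hy, accDens, hastingsRatio_self, one_mul]
    have hacc : acc πd Jd x₀ = (leb S).withDensity (fun y => ENNReal.ofReal (Jd x₀ y)) := by
      rw [acc, hJeq]
    have haccu : acc πd Jd x₀ Set.univ = 1 := by
      rw [hacc]
      haveI := hA.J_dens_prob x₀
      exact measure_univ
    have : r = 0 := by
      rw [hrdef, rej, haccu, ENNReal.toReal_one, sub_self]
    linarith [hr, this]
  · -- d > 0 : π {x₀} = 0 but dirac x₀ {x₀} = 1
    haveI : NeZero d := ⟨hd.ne'⟩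
    have hleb : leb S {x₀} = 0 := by
      rw [leb, (MeasurableEmbedding.subtype_coe hA.measS).comap_apply, Set.image_singleton]
      exact measure_singleton _
    have hpi : π {x₀} = 0 := hA.pi_ac hleb
    have := hdac hpi
    rw [Measure.dirac_apply_of_mem (Set.mem_singleton x₀)] at this
    exact one_ne_zero this

end MHLDP
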